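/- Let n be a positive integer, A_n the n×n tridiagonal matrix with [A_n]_{k,k} = −k², [A_n]_{k,k−1} = k(k+n)/2, [A_n]_{k,k+1} = k(k−n)/2, B_n the diagonal matrix with [B_n]_{kk} = k, f_n = (1,…,1)^T, and e_n = (1,0,…,0)^T. Then for every integer 1 ≤ ℓ ≤ 2n, A_n B_n^ℓ f_n = ∑_{j=0}^{⌊(ℓ−1)/2⌋} [C(ℓ, 2j+2) − n·C(ℓ, 2j+1)] B_n^{ℓ−2j} f_n. Moreover A_n f_n = −((n+1)/2)·e_n. -/

import Mathlib

open Finset Matrix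

/-- The tridiagonal matrix `A_n` with `[A_n]_{k,k} = -k²`, `[A_n]_{k,k-1} = k(k+n)/2`,
`[A_n]_{k,k+1} = k(k-n)/2`, indices `1,…,n` realized on `Fin n` via `i ↦ i+1`. -/
noncomputable def Amat (n : ℕ) : Matrix (Fin n) (Fin n) ℝ :=
  fun i j =>
    if (i : ℕ) = (j : ℕ) then -(((i : ℕ) + 1 : ℝ) ^ 2)
    else if (i : ℕ) = (j : ℕ) + 1 then (((i : ℕ) + 1 : ℝ) * (((i : ℕ) + 1) + n)) / 2
    else if (j : ℕ) = (i : ℕ) + 1 then (((i : ℕ) + 1 : ℝ) * (((i : ℕ) + 1 : ℝ) - n)) / 2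
    else 0

/-- Diagonal matrix `B_n` with `[B_n]_{kk} = k`. -/
noncomputable def Bmat (n : ℕ) : Matrix (Fin n) (Fin n) ℝ :=
  Matrix.diagonal (fun k : Fin n => ((k : ℕ) + 1 : ℝ))

/-- All-ones vector `f_n`. -/
noncomputable def fvec (n : ℕ) : Fin n → ℝ := fun _ => 1

/-- First coordinate vector `e_n = (1,0,…,0)`. -/
noncomputable def evec (n : ℕ) : Fin n → ℝ := fun k => if (k : ℕ) = 0 then 1 else 0

lemma even_sum (f : ℕ → ℝ) (N : ℕ) :
    ∑ i ∈ Finset.range (2*N), (1 + (-1:ℝ)^i) * f i = 2 * ∑ j ∈ Finset.range N, f (2*j) := by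
  induction N with
  | zero => simp
  | succ N ih =>
    have h2 : 2*(N+1) = (2*N)+1+1 := by ring
    rw [h2, Finset.sum_range_succ, Finset.sum_range_succ, Finset.sum_range_succ, ih]
    have he : (-1:ℝ)^(2*N) = 1 := by rw [pow_mul]; norm_num
    have ho : (-1:ℝ)^(2*N+1) = -1 := by rw [pow_succ, he]; norm_num
    rw [he, ho]; ring

lemma odd_sum (f : ℕ → ℝ) (N : ℕ) :
    ∑ i ∈ Finset.range (2*N), (1 - (-1:ℝ)^i) * f i = 2 * ∑ j ∈ Finset.range N, f (2*j+1) := by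
  induction N with
  | zero => simp
  | succ N ih =>
    have h2 : 2*(N+1) = (2*N)+1+1 := by ring
    rw [h2, Finset.sum_range_succ, Finset.sum_range_succ, Finset.sum_range_succ, ih]
    have he : (-1:ℝ)^(2*N) = 1 := by rw [pow_mul]; norm_num
    have ho : (-1:ℝ)^(2*N+1) = -1 := by rw [pow_succ, he]; norm_num
    rw [he, ho]; ring

lemma plus_expand (ℓ : ℕ) (x : ℝ) :
    (x+1)^ℓ = ∑ i ∈ Finset.range (ℓ+1), (ℓ.choose i : ℝ) * x^(ℓ-i) := by
  rw [add_pow]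
  rw [← Finset.sum_range_reflect (fun i => (ℓ.choose i : ℝ) * x^(ℓ-i)) (ℓ+1)]
  refine Finset.sum_congr rfl fun m hm => ?_
  simp only [Finset.mem_range] at hm
  have hm' : m ≤ ℓ := by omega
  have h1 : ℓ + 1 - 1 - m = ℓ - m := by omega
  rw [h1, Nat.choose_symm hm', one_pow]
  have : ℓ - (ℓ - m) = m := by omega
  rw [this]; ring

lemma minus_expand (ℓ : ℕ) (x : ℝ) :
    (x-1)^ℓ = ∑ i ∈ Finset.range (ℓ+1), (-1:ℝ)^i * ((ℓ.choose i : ℝ) * x^(ℓ-i)) := by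
  have : x - 1 = x + (-1) := by ring
  rw [this, add_pow]
  rw [← Finset.sum_range_reflect (fun i => (-1:ℝ)^i * ((ℓ.choose i : ℝ) * x^(ℓ-i))) (ℓ+1)]
  refine Finset.sum_congr rfl fun m hm => ?_
  simp only [Finset.mem_range] at hm
  have hm' : m ≤ ℓ := by omega
  have h1 : ℓ + 1 - 1 - m = ℓ - m := by omega
  rw [h1, Nat.choose_symm hm']
  have h2 : ℓ - (ℓ - m) = m := by omega
  rw [h2]; ring

lemma key (n ℓ : ℕ) (hℓ : 1 ≤ ℓ) (x : ℝ) :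
    x*(x+n)/2 * (x-1)^ℓ - x^2 * x^ℓ + x*(x-n)/2 * (x+1)^ℓ
      = ∑ j ∈ Finset.range ((ℓ-1)/2+1),
          ((ℓ.choose (2*j+2) : ℝ) - (n:ℝ) * (ℓ.choose (2*j+1) : ℝ)) * x^(ℓ-2*j) := by
  set G : ℕ → ℝ := fun i => (ℓ.choose i : ℝ) * x^(ℓ-i) with hG
  -- extend expansions to range (2*(ℓ+1))
  have hGzero : ∀ i, ℓ < i → G i = 0 := by
    intro i hi
    simp [hG, Nat.choose_eq_zero_of_lt hi]
  have hplus : (x+1)^ℓ = ∑ i ∈ Finset.range (2*(ℓ+1)), G i := by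
    rw [plus_expand]
    exact Finset.sum_subset (Finset.range_subset_range.2 (by omega))
      (fun i _ hi => hGzero i (by simp only [Finset.mem_range] at hi ⊢; omega))
  have hminus : (x-1)^ℓ = ∑ i ∈ Finset.range (2*(ℓ+1)), (-1:ℝ)^i * G i := by
    rw [minus_expand]
    refine Finset.sum_subset (Finset.range_subset_range.2 (by omega)) ?_
    intro i _ hi
    simp only [Finset.mem_range] at hi
    simp [Nat.choose_eq_zero_of_lt (show ℓ < i by omega)]
  have hsum : (x-1)^ℓ + (x+1)^ℓ = 2 * ∑ j ∈ Finset.range (ℓ+1), G (2*j) := by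
    rw [hplus, hminus, ← even_sum G (ℓ+1), ← Finset.sum_add_distrib]
    exact Finset.sum_congr rfl fun i _ => by ring
  have hdiff : (x+1)^ℓ - (x-1)^ℓ = 2 * ∑ j ∈ Finset.range (ℓ+1), G (2*j+1) := by
    rw [hplus, hminus, ← odd_sum G (ℓ+1), ← Finset.sum_sub_distrib]
    exact Finset.sum_congr rfl fun i _ => by ring
  have hLHS : x*(x+n)/2 * (x-1)^ℓ - x^2 * x^ℓ + x*(x-n)/2 * (x+1)^ℓ
      = x^2/2 * ((x-1)^ℓ + (x+1)^ℓ) - (n:ℝ)*x/2 * ((x+1)^ℓ - (x-1)^ℓ) - x^2 * x^ℓ := by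
    ring
  rw [hLHS, hsum, hdiff]
  -- peel off the j = 0 term of the even sum
  rw [Finset.sum_range_succ' (fun j => G (2*j)) ℓ]
  have hG0 : G (2*0) = x^ℓ := by norm_num [hG]
  -- extend ∑_{j<ℓ} G(2j+2) to range (ℓ+1)
  have hext : ∑ j ∈ Finset.range ℓ, G (2*(j+1)) = ∑ j ∈ Finset.range (ℓ+1), G (2*j+2) := by
    have step1 : ∑ j ∈ Finset.range ℓ, G (2*(j+1)) = ∑ j ∈ Finset.range ℓ, G (2*j+2) :=
      Finset.sum_congr rfl fun j _ => by rw [show 2*(j+1) = 2*j+2 from by ring]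
    rw [step1]
    exact Finset.sum_subset (Finset.range_subset_range.2 (by omega))
        (fun i _ hi => hGzero _ (by simp only [Finset.mem_range] at hi ⊢; omega))
  -- extend RHS to range (ℓ+1)
  have hrhs : ∑ j ∈ Finset.range ((ℓ-1)/2+1),
        ((ℓ.choose (2*j+2) : ℝ) - (n:ℝ) * (ℓ.choose (2*j+1) : ℝ)) * x^(ℓ-2*j)
      = ∑ j ∈ Finset.range (ℓ+1),
        ((ℓ.choose (2*j+2) : ℝ) - (n:ℝ) * (ℓ.choose (2*j+1) : ℝ)) * x^(ℓ-2*j) := by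
    refine Finset.sum_subset (Finset.range_subset_range.2 (by omega)) ?_
    intro j _ hj
    simp only [Finset.mem_range] at hj
    have h1 : ℓ < 2*j+1 := by omega
    rw [Nat.choose_eq_zero_of_lt h1, Nat.choose_eq_zero_of_lt (by omega)]
    norm_num
  rw [hrhs, hext, hG0]
  rw [show x^2/2 * (2 * (∑ j ∈ Finset.range (ℓ+1), G (2*j+2) + x^ℓ))
        - (n:ℝ)*x/2 * (2 * ∑ j ∈ Finset.range (ℓ+1), G (2*j+1)) - x^2 * x^ℓ
      = ∑ j ∈ Finset.range (ℓ+1), (x^2 * G (2*j+2) - (n:ℝ)*x*G (2*j+1)) from by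
    rw [Finset.sum_sub_distrib, ← Finset.mul_sum, ← Finset.mul_sum]; ring]
  refine Finset.sum_congr rfl fun j _ => ?_
  have e1 : x^2 * G (2*j+2) = (ℓ.choose (2*j+2) : ℝ) * x^(ℓ-2*j) := by
    by_cases h : 2*j+2 ≤ ℓ
    · simp only [hG]
      rw [show ℓ - 2*j = (ℓ - (2*j+2)) + 2 from by omega, pow_add]
      ring
    · rw [hGzero _ (by omega), Nat.choose_eq_zero_of_lt (by omega)]
      norm_num
  have e2 : x * G (2*j+1) = (ℓ.choose (2*j+1) : ℝ) * x^(ℓ-2*j) := by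
    by_cases h : 2*j+1 ≤ ℓ
    · simp only [hG]
      rw [show ℓ - 2*j = (ℓ - (2*j+1)) + 1 from by omega, pow_add]
      ring
    · rw [hGzero _ (by omega), Nat.choose_eq_zero_of_lt (by omega)]
      norm_num
  rw [e1]
  rw [show (n:ℝ)*x*G (2*j+1) = (n:ℝ)*(x*G (2*j+1)) from by ring, e2]
  ring

lemma row (n : ℕ) (v : Fin n → ℝ) (i : Fin n) :
    (Amat n).mulVec v i
      = (if h : 1 ≤ (i:ℕ) then
            ((((i:ℕ)+1:ℝ)) * (((i:ℕ)+1) + n) / 2) * v ⟨(i:ℕ)-1, by omega⟩ else 0)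
        + (-(((i:ℕ)+1:ℝ)^2)) * v i
        + (if h : (i:ℕ)+1 < n then
            ((((i:ℕ)+1:ℝ)) * (((i:ℕ)+1:ℝ) - n) / 2) * v ⟨(i:ℕ)+1, h⟩ else 0) := by
  classical
  have hsplit : ∀ j : Fin n, Amat n i j * v j
      = (if (i:ℕ) = (j:ℕ)+1 then ((((i:ℕ)+1:ℝ)) * (((i:ℕ)+1) + n) / 2) * v j else 0)
        + (if j = i then (-(((i:ℕ)+1:ℝ)^2)) * v j else 0)
        + (if (j:ℕ) = (i:ℕ)+1 then ((((i:ℕ)+1:ℝ)) * (((i:ℕ)+1:ℝ) - n) / 2) * v j else 0) := by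
    intro j
    simp only [Amat, Fin.ext_iff]
    split_ifs <;> try (exfalso; omega)
    all_goals ring
  show ∑ j, Amat n i j * v j = _
  rw [Finset.sum_congr rfl (fun j _ => hsplit j), Finset.sum_add_distrib,
    Finset.sum_add_distrib]
  congr 1
  · congr 1
    · by_cases h1 : 1 ≤ (i:ℕ)
      · rw [dif_pos h1]
        have : ∀ j : Fin n, ((i:ℕ) = (j:ℕ)+1) ↔ j = (⟨(i:ℕ)-1, by omega⟩ : Fin n) := by
          intro j; rw [Fin.ext_iff]; simp; omega
        rw [Finset.sum_congr rfl (fun j _ => by rw [if_congr (this j) rfl rfl])]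
        rw [Finset.sum_ite_eq' Finset.univ]
        simp
      · rw [dif_neg h1]
        refine Finset.sum_eq_zero fun j _ => ?_
        rw [if_neg (by omega)]
    · rw [Finset.sum_ite_eq' Finset.univ i]
      simp
  · by_cases h : (i:ℕ)+1 < n
    · rw [dif_pos h]
      have : ∀ j : Fin n, ((j:ℕ) = (i:ℕ)+1) ↔ j = (⟨(i:ℕ)+1, h⟩ : Fin n) := by
        intro j; rw [Fin.ext_iff]
      rw [Finset.sum_congr rfl (fun j _ => by rw [if_congr (this j) rfl rfl])]
      rw [Finset.sum_ite_eq' Finset.univ]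
      simp
    · rw [dif_neg h]
      refine Finset.sum_eq_zero fun j _ => ?_
      rw [if_neg (by have := j.isLt; omega)]

lemma Bpow (n ℓ : ℕ) :
    ((Bmat n) ^ ℓ).mulVec (fvec n) = fun j : Fin n => (((j:ℕ)+1 : ℝ))^ℓ := by
  funext j
  rw [Bmat, Matrix.diagonal_pow, Matrix.mulVec_diagonal]
  simp [fvec]

theorem stmt11 (n : ℕ) (hn : 0 < n) :
    (∀ ℓ : ℕ, 1 ≤ ℓ → ℓ ≤ 2 * n →
      (Amat n).mulVec (((Bmat n) ^ ℓ).mulVec (fvec n))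
        = ∑ j ∈ Finset.range ((ℓ - 1) / 2 + 1),
            ((ℓ.choose (2 * j + 2) : ℝ) - (n : ℝ) * (ℓ.choose (2 * j + 1) : ℝ))
              • ((Bmat n) ^ (ℓ - 2 * j)).mulVec (fvec n))
      ∧ (Amat n).mulVec (fvec n) = (-(((n : ℝ) + 1) / 2)) • evec n := by
  constructor
  · intro ℓ hℓ1 hℓ2
    funext i
    have hv : ∀ j : Fin n, ((Bmat n) ^ ℓ).mulVec (fvec n) j = (((j:ℕ)+1 : ℝ))^ℓ := by
      intro j; rw [Bpow]
    have hrow := row n (((Bmat n) ^ ℓ).mulVec (fvec n)) i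
    simp only [hv] at hrow
    set x : ℝ := ((i:ℕ)+1 : ℝ) with hx
    have hL : (Amat n).mulVec (((Bmat n) ^ ℓ).mulVec (fvec n)) i
        = x*(x+n)/2 * (x-1)^ℓ - x^2 * x^ℓ + x*(x-n)/2 * (x+1)^ℓ := by
      rw [hrow]
      have h1 : (if h : 1 ≤ (i:ℕ) then
            (x * (x + n) / 2) * (((((i:ℕ)-1 : ℕ))+1 : ℝ))^ℓ else 0)
          = x*(x+n)/2 * (x-1)^ℓ := by
        by_cases h1 : 1 ≤ (i:ℕ)
        · rw [dif_pos h1]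
          have hnat : ((i:ℕ)-1 : ℕ) + 1 = (i:ℕ) := by omega
          have : ((((i:ℕ)-1 : ℕ))+1 : ℝ) = x - 1 := by
            rw [hx, show ((((i:ℕ)-1 : ℕ))+1 : ℝ) = ((((i:ℕ)-1)+1 : ℕ) : ℝ) from by
              push_cast; ring, hnat]
            ring
          rw [this]
        · rw [dif_neg h1]
          have hi0 : (i:ℕ) = 0 := by omega
          have : x - 1 = 0 := by rw [hx, hi0]; norm_num
          rw [this, zero_pow (by omega)]
          ring
      have h3 : (if h : (i:ℕ)+1 < n then
            (x * (x - n) / 2) * (((((i:ℕ)+1 : ℕ))+1 : ℝ))^ℓ else 0)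
          = x*(x-n)/2 * (x+1)^ℓ := by
        by_cases h3 : (i:ℕ)+1 < n
        · rw [dif_pos h3]
          have : ((((i:ℕ)+1 : ℕ))+1 : ℝ) = x + 1 := by rw [hx]; push_cast; ring
          rw [this]
        · rw [dif_neg h3]
          have hi : (i:ℕ)+1 = n := by have := i.isLt; omega
          have hc : (n:ℝ) = ((i:ℕ):ℝ)+1 := by exact_mod_cast hi.symm
          have : x - n = 0 := by rw [hx, hc]; ring
          rw [this]
          ring
      rw [h1, h3]
      ring
    rw [hL, key n ℓ hℓ1 x]
    rw [Finset.sum_apply]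
    refine Finset.sum_congr rfl fun j _ => ?_
    rw [Pi.smul_apply, Bpow, smul_eq_mul]
  · funext i
    rw [row n (fvec n) i]
    simp only [fvec, evec, Pi.smul_apply, smul_eq_mul, mul_one]
    have hlt := i.isLt
    split_ifs with h1 h2 h3 h4 h5 h6 <;> try (exfalso; omega)
    · ring
    · have hn' : n = (i:ℕ)+1 := by omega
      have hc : (n:ℝ) = ((i:ℕ):ℝ)+1 := by exact_mod_cast hn'
      rw [hc]
      ring
    · have h0 : (i:ℕ) = 0 := by omega
      have hc : (((i:ℕ):ℝ)) = 0 := by exact_mod_cast h0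
      rw [hc]
      ring
    · have hn1 : n = 1 := by omega
      have h0 : (i:ℕ) = 0 := by omega
      have hc : (((i:ℕ):ℝ)) = 0 := by exact_mod_cast h0
      have hcn : ((n:ℕ):ℝ) = 1 := by exact_mod_cast hn1
      rw [hc, hcn]
      norm_num
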